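/- Let α > 1 and let h : (0,1] → ℝ be positive, monotone increasing, with h(x) ≤ x^α for all x ∈ (0,1]; set μ(x) := ∫_x^1 dt/h(t). Then for every s > 0, every f ∈ L²(0,1), and every x ∈ (0,1), the integral ∫_0^x exp(s(μ(x) − μ(y))) f(y) dy is well defined and satisfies |∫_0^x exp(s(μ(x) − μ(y))) f(y) dy| ≤ (1/√(2s)) · √(h(x)) · ‖f‖_{L²(0,1)}. -/

import Mathlib

open MeasureTheory Set Real

/-- Lemma 3.1(i): the estimate `|P_{0,s}^{1/h} f(x)| ≤ (1/√(2s)) √(h(x)) ‖f‖_{L²}`. -/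
theorem stmt_0 (α : ℝ) (hα : 1 < α) (h : ℝ → ℝ)
    (hpos : ∀ x ∈ Ioc (0:ℝ) 1, 0 < h x)
    (hmono : ∀ x ∈ Ioc (0:ℝ) 1, ∀ y ∈ Ioc (0:ℝ) 1, x ≤ y → h x ≤ h y)
    (hbound : ∀ x ∈ Ioc (0:ℝ) 1, h x ≤ x ^ α)
    (μ : ℝ → ℝ) (hμ : ∀ x, μ x = ∫ t in x..1, 1 / h t)
    (s : ℝ) (hs : 0 < s) (f : ℝ → ℝ)
    (hf : MemLp f 2 (volume.restrict (Ioo (0:ℝ) 1)))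
    (x : ℝ) (hx : x ∈ Ioo (0:ℝ) 1) :
    IntegrableOn (fun y => Real.exp (s * (μ x - μ y)) * f y) (Ioo 0 x) ∧
    |∫ y in Ioo 0 x, Real.exp (s * (μ x - μ y)) * f y| ≤
      (1 / Real.sqrt (2 * s)) * Real.sqrt (h x) *
        (eLpNorm f 2 (volume.restrict (Ioo (0:ℝ) 1))).toReal := by
  obtain ⟨hx0, hx1⟩ := hx
  have hxm : x ∈ Ioc (0:ℝ) 1 := ⟨hx0, hx1.le⟩
  have hhx : 0 < h x := hpos x hxm
  -- measurability of h
  have hmeas : AEMeasurable h (volume.restrict (Ioc (0:ℝ) 1)) :=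
    aemeasurable_restrict_of_monotoneOn measurableSet_Ioc
      (fun a ha b hb hab => hmono a ha b hb hab)
  -- interval integrability of 1/h
  have hInt : ∀ a ∈ Ioc (0:ℝ) 1, ∀ b ∈ Ioc (0:ℝ) 1, a ≤ b →
      IntervalIntegrable (fun t => 1 / h t) volume a b := by
    intro a ha b hb hab
    rw [intervalIntegrable_iff_integrableOn_Ioc_of_le hab]
    have hsub : Ioc a b ⊆ Ioc (0:ℝ) 1 := Ioc_subset_Ioc ha.1.le hb.2
    have hm : AEMeasurable (fun t => 1 / h t) (volume.restrict (Ioc a b)) := by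
      have := hmeas.mono_measure (Measure.restrict_mono hsub le_rfl)
      simpa only [one_div, Pi.inv_def] using this.inv
    refine Integrable.mono' (g := fun _ => 1 / h a)
      (integrableOn_const measure_Ioc_lt_top.ne) hm.aestronglyMeasurable ?_
    rw [ae_restrict_iff' measurableSet_Ioc]
    refine ae_of_all _ fun t ht => ?_
    have htm : t ∈ Ioc (0:ℝ) 1 := hsub ht
    have h1 : 0 < h a := hpos a ha
    have h2 : h a ≤ h t := hmono a ha t htm ht.1.le
    have h3 : 0 < h t := hpos t htm
    rw [Real.norm_eq_abs, abs_of_pos (by positivity : (0:ℝ) < 1 / h t)]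
    exact one_div_le_one_div_of_le h1 h2
  -- μ differences as interval integrals
  have hμdiff : ∀ a ∈ Ioc (0:ℝ) 1, ∀ b ∈ Ioc (0:ℝ) 1, a ≤ b →
      μ a - μ b = ∫ t in a..b, 1 / h t := by
    intro a ha b hb hab
    have H := intervalIntegral.integral_add_adjacent_intervals
      (hInt a ha b hb hab) (hInt b hb 1 (by norm_num) hb.2)
    rw [hμ a, hμ b]; linarith
  -- key lower bound
  have hkey : ∀ y ∈ Ioo (0:ℝ) x, (x - y) / h x ≤ μ y - μ x := by
    intro y hy
    have hym : y ∈ Ioc (0:ℝ) 1 := ⟨hy.1, le_trans hy.2.le hx1.le⟩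
    rw [hμdiff y hym x hxm hy.2.le]
    have hc : (∫ _ in y..x, 1 / h x) = (x - y) * (1 / h x) := by
      simp [intervalIntegral.integral_const, smul_eq_mul]
    have hmon := intervalIntegral.integral_mono_on (f := fun _ => 1 / h x)
      (g := fun t => 1 / h t) hy.2.le intervalIntegrable_const
      (hInt y hym x hxm hy.2.le) ?_
    · rw [hc] at hmon
      calc (x - y) / h x = (x - y) * (1 / h x) := by ring
        _ ≤ _ := hmon
    · intro t ht
      have htm : t ∈ Ioc (0:ℝ) 1 := ⟨lt_of_lt_of_le hy.1 ht.1, le_trans ht.2 hx1.le⟩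
      exact one_div_le_one_div_of_le (hpos t htm) (hmono t htm x hxm ht.2)
  have hE1 : ∀ y ∈ Ioo (0:ℝ) x, Real.exp (s * (μ x - μ y)) ≤ 1 := by
    intro y hy
    have hk := hkey y hy
    have hd : 0 ≤ (x - y) / h x := div_nonneg (by linarith [hy.2]) hhx.le
    have : s * (μ x - μ y) ≤ 0 := by nlinarith
    calc Real.exp (s * (μ x - μ y)) ≤ Real.exp 0 := Real.exp_le_exp.mpr this
      _ = 1 := Real.exp_zero
  -- measurability of μ
  have hμmeas : AEMeasurable μ (volume.restrict (Ioo (0:ℝ) x)) := by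
    have hanti : AntitoneOn μ (Ioo (0:ℝ) x) := by
      intro a ha b hb hab
      have ham : a ∈ Ioc (0:ℝ) 1 := ⟨ha.1, le_trans ha.2.le hx1.le⟩
      have hbm : b ∈ Ioc (0:ℝ) 1 := ⟨hb.1, le_trans hb.2.le hx1.le⟩
      have hd := hμdiff a ham b hbm hab
      have hnn : 0 ≤ ∫ t in a..b, 1 / h t := by
        refine intervalIntegral.integral_nonneg hab fun t ht => ?_
        have htm : t ∈ Ioc (0:ℝ) 1 := ⟨lt_of_lt_of_le ha.1 ht.1, le_trans ht.2 hbm.2⟩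
        have := hpos t htm
        positivity
      linarith
    exact aemeasurable_restrict_of_antitoneOn measurableSet_Ioo hanti
  have hEmeas : AEStronglyMeasurable (fun y => Real.exp (s * (μ x - μ y)))
      (volume.restrict (Ioo (0:ℝ) x)) :=
    (Real.measurable_exp.comp_aemeasurable
      ((aemeasurable_const.sub hμmeas).const_mul s)).aestronglyMeasurable
  have hfx : MemLp f 2 (volume.restrict (Ioo (0:ℝ) x)) :=
    hf.mono_measure (Measure.restrict_mono (Ioo_subset_Ioo le_rfl hx1.le) le_rfl)
  have hfint : IntegrableOn f (Ioo (0:ℝ) x) volume := hfx.integrable one_le_two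
  have hEb : ∀ᵐ y ∂(volume.restrict (Ioo (0:ℝ) x)),
      ‖Real.exp (s * (μ x - μ y))‖ ≤ 1 := by
    rw [ae_restrict_iff' measurableSet_Ioo]
    refine ae_of_all _ fun y hy => ?_
    rw [Real.norm_eq_abs, abs_of_pos (Real.exp_pos _)]
    exact hE1 y hy
  -- integrability of the integrand
  have hint : IntegrableOn (fun y => Real.exp (s * (μ x - μ y)) * f y) (Ioo 0 x) := by
    refine Integrable.mono' hfint.abs (hEmeas.mul hfx.aestronglyMeasurable) ?_
    filter_upwards [hEb] with y hy
    rw [norm_mul]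
    calc ‖Real.exp (s * (μ x - μ y))‖ * ‖f y‖ ≤ 1 * ‖f y‖ :=
        mul_le_mul_of_nonneg_right hy (norm_nonneg _)
      _ = |f y| := by rw [one_mul, Real.norm_eq_abs]
  refine ⟨hint, ?_⟩
  haveI : IsFiniteMeasure (volume.restrict (Ioo (0:ℝ) x)) :=
    ⟨by rw [Measure.restrict_apply_univ]; exact measure_Ioo_lt_top⟩
  have hEL2 : MemLp (fun y => Real.exp (s * (μ x - μ y))) 2
      (volume.restrict (Ioo (0:ℝ) x)) := MemLp.of_bound hEmeas 1 hEb
  -- bound on ∫ E²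
  set c : ℝ := 2 * s / h x with hcdef
  have hcpos : 0 < c := by positivity
  have hcont : Continuous (fun y : ℝ => Real.exp (c * (y - x))) := by fun_prop
  have hRint : IntegrableOn (fun y => Real.exp (c * (y - x))) (Ioo (0:ℝ) x) :=
    hcont.integrableOn_Ioc.mono_set Ioo_subset_Ioc_self
  have hEsq_int : Integrable (fun y => (Real.exp (s * (μ x - μ y))) ^ 2)
      (volume.restrict (Ioo (0:ℝ) x)) := hEL2.integrable_sq
  have hEsq_le : (∫ y in Ioo (0:ℝ) x, (Real.exp (s * (μ x - μ y))) ^ 2) ≤ h x / (2 * s) := by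
    have step1 : (∫ y in Ioo (0:ℝ) x, (Real.exp (s * (μ x - μ y))) ^ 2)
        ≤ ∫ y in Ioo (0:ℝ) x, Real.exp (c * (y - x)) := by
      refine integral_mono_ae hEsq_int hRint ?_
      rw [Filter.EventuallyLE, ae_restrict_iff' measurableSet_Ioo]
      refine ae_of_all _ fun y hy => ?_
      have hk := hkey y hy
      have hsq : (Real.exp (s * (μ x - μ y))) ^ 2 = Real.exp (2 * (s * (μ x - μ y))) := by
        rw [sq, ← Real.exp_add]; ring_nf
      rw [hsq]
      apply Real.exp_le_exp.mpr
      have h3 : c * (y - x) = -(2 * s * ((x - y) / h x)) := by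
        rw [hcdef]; field_simp; ring
      rw [h3]
      nlinarith [mul_le_mul_of_nonneg_left hk (show (0:ℝ) ≤ 2 * s by positivity)]
    have step2 : (∫ y in Ioo (0:ℝ) x, Real.exp (c * (y - x))) ≤ h x / (2 * s) := by
      have hder : ∀ y ∈ uIcc (0:ℝ) x,
          HasDerivAt (fun y => Real.exp (c * (y - x)) / c) (Real.exp (c * (y - x))) y := by
        intro y _
        have h1 : HasDerivAt (fun y : ℝ => c * (y - x)) c y := by
          simpa using ((hasDerivAt_id y).sub_const x).const_mul c
        have h2 := h1.exp
        have h3 := h2.div_const c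
        rw [mul_div_assoc, div_self hcpos.ne', mul_one] at h3
        exact h3
      have hcalc : (∫ y in (0:ℝ)..x, Real.exp (c * (y - x)))
          = Real.exp (c * (x - x)) / c - Real.exp (c * (0 - x)) / c :=
        intervalIntegral.integral_eq_sub_of_hasDerivAt hder
          (hcont.intervalIntegrable 0 x)
      have heq : (∫ y in Ioo (0:ℝ) x, Real.exp (c * (y - x)))
          = Real.exp (c * (x - x)) / c - Real.exp (c * (0 - x)) / c := by
        rw [← hcalc, intervalIntegral.integral_of_le hx0.le, integral_Ioc_eq_integral_Ioo]
      rw [heq]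
      have hkey2 : h x / (2 * s) = 1 / c := by
        rw [hcdef, one_div_div]
      rw [hkey2]
      have := Real.exp_pos (c * (0 - x))
      simp only [sub_self, mul_zero, Real.exp_zero]
      have h4 : 0 < Real.exp (c * (0 - x)) / c := by positivity
      linarith
    linarith
  -- Hölder
  have h22 : Real.HolderConjugate 2 2 := Real.HolderConjugate.two_two
  have hfabs : MemLp (fun y => |f y|) 2 (volume.restrict (Ioo (0:ℝ) x)) := by
    simpa [Real.norm_eq_abs] using hfx.norm
  have hof : ENNReal.ofReal (2:ℝ) = 2 := by norm_num
  have hHolder := MeasureTheory.integral_mul_le_Lp_mul_Lq_of_nonneg h22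
    (f := fun y => Real.exp (s * (μ x - μ y))) (g := fun y => |f y|)
    (μ := volume.restrict (Ioo (0:ℝ) x))
    (ae_of_all _ fun y => (Real.exp_pos _).le) (ae_of_all _ fun y => abs_nonneg _)
    (by rw [hof]; exact hEL2) (by rw [hof]; exact hfabs)
  -- convert rpow exponents 2 to ℕ pow
  have hrtwo : ∀ z : ℝ, z ^ (2:ℝ) = z ^ 2 := fun z => by
    rw [show (2:ℝ) = ((2:ℕ):ℝ) by norm_num, Real.rpow_natCast]
  simp only [hrtwo] at hHolder
  -- |∫ E f| ≤ ∫ E |f|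
  have habs1 : |∫ y in Ioo (0:ℝ) x, Real.exp (s * (μ x - μ y)) * f y|
      ≤ ∫ y in Ioo (0:ℝ) x, Real.exp (s * (μ x - μ y)) * |f y| := by
    rw [← Real.norm_eq_abs]
    refine le_trans (norm_integral_le_integral_norm _)
      (le_of_eq (integral_congr_ae (ae_of_all _ fun y => ?_)))
    simp only [Real.norm_eq_abs, abs_mul, abs_of_pos (Real.exp_pos (s * (μ x - μ y)))]
  -- bound the E factor
  have hEint_nonneg : 0 ≤ ∫ y in Ioo (0:ℝ) x, (Real.exp (s * (μ x - μ y))) ^ 2 :=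
    integral_nonneg fun y => sq_nonneg _
  have hA : (∫ y in Ioo (0:ℝ) x, (Real.exp (s * (μ x - μ y))) ^ 2) ^ (1/(2:ℝ))
      ≤ (1 / Real.sqrt (2 * s)) * Real.sqrt (h x) := by
    have h1 : (∫ y in Ioo (0:ℝ) x, (Real.exp (s * (μ x - μ y))) ^ 2) ^ (1/(2:ℝ))
        ≤ (h x / (2 * s)) ^ (1/(2:ℝ)) :=
      Real.rpow_le_rpow hEint_nonneg hEsq_le (by norm_num)
    refine le_trans h1 (le_of_eq ?_)
    rw [← Real.sqrt_eq_rpow, Real.sqrt_div hhx.le]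
    ring
  -- bound the f factor
  have hfsq_int : Integrable (fun y => f y ^ 2) (volume.restrict (Ioo (0:ℝ) 1)) :=
    hf.integrable_sq
  have hfsq_mono : (∫ y in Ioo (0:ℝ) x, |f y| ^ 2) ≤ ∫ y in Ioo (0:ℝ) 1, |f y| ^ 2 := by
    have habs_int : IntegrableOn (fun y => |f y| ^ 2) (Ioo (0:ℝ) 1) volume := by
      simpa [sq_abs, IntegrableOn] using hfsq_int
    refine setIntegral_mono_set habs_int (ae_of_all _ fun y => sq_nonneg _) ?_
    exact HasSubset.Subset.eventuallyLE (Ioo_subset_Ioo le_rfl hx1.le)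
  have hfsq_nonneg : 0 ≤ ∫ y in Ioo (0:ℝ) x, |f y| ^ 2 :=
    integral_nonneg fun y => sq_nonneg _
  have hN : (eLpNorm f 2 (volume.restrict (Ioo (0:ℝ) 1))).toReal
      = (∫ y in Ioo (0:ℝ) 1, |f y| ^ 2) ^ (1/(2:ℝ)) := by
    rw [hf.eLpNorm_eq_integral_rpow_norm two_ne_zero ENNReal.ofNat_ne_top]
    rw [ENNReal.toReal_ofReal]
    · congr 1
      · refine integral_congr_ae (ae_of_all _ fun y => ?_)
        simp [Real.norm_eq_abs, hrtwo]
      · norm_num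
    · refine Real.rpow_nonneg (integral_nonneg fun y => ?_) _
      positivity
  have hB : (∫ y in Ioo (0:ℝ) x, |f y| ^ 2) ^ (1/(2:ℝ))
      ≤ (eLpNorm f 2 (volume.restrict (Ioo (0:ℝ) 1))).toReal := by
    rw [hN]
    exact Real.rpow_le_rpow hfsq_nonneg hfsq_mono (by norm_num)
  -- assemble
  have hRHS1nonneg : (0:ℝ) ≤ 1 / Real.sqrt (2 * s) * Real.sqrt (h x) := by positivity
  calc |∫ y in Ioo (0:ℝ) x, Real.exp (s * (μ x - μ y)) * f y|
      ≤ ∫ y in Ioo (0:ℝ) x, Real.exp (s * (μ x - μ y)) * |f y| := habs1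
    _ ≤ (∫ y in Ioo (0:ℝ) x, (Real.exp (s * (μ x - μ y))) ^ 2) ^ (1/(2:ℝ)) *
          (∫ y in Ioo (0:ℝ) x, |f y| ^ 2) ^ (1/(2:ℝ)) := hHolder
    _ ≤ (1 / Real.sqrt (2 * s) * Real.sqrt (h x)) *
          (eLpNorm f 2 (volume.restrict (Ioo (0:ℝ) 1))).toReal := by
        refine mul_le_mul hA hB (Real.rpow_nonneg hfsq_nonneg _) hRHS1nonneg
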